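/- Lemma 1 of the paper: for all agents a, ..., b, all epistemic formulas ψ, χ_a, ..., χ_b ∈ L_EL, and all formulas φ, the formula [ψ ∧ K_a t([ψ]χ_a) ∧ ... ∧ K_b t([ψ]χ_b)] φ ↔ [ψ][K_a χ_a ∧ ... ∧ K_b χ_b] φ is valid in all epistemic models, where t is the standard translation of PAL into epistemic logic. -/

import Mathlib

inductive Form (A : Type) : Type
  | atom : Nat → Form A
  | bot  : Form A
  | neg  : Form A → Form A
  | and  : Form A → Form A → Form A
  | know : A → Form A → Form A
  | ann  : Form A → Form A → Form A

def Form.imp {A : Type} (φ ψ : Form A) : Form A := .neg (.and φ (.neg ψ))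

def Form.top {A : Type} : Form A := .neg .bot

/-- Purely epistemic (announcement-free) formulas: the language L_EL. -/
def Form.IsEL {A : Type} : Form A → Prop
  | .atom _ => True
  | .bot => True
  | .neg φ => φ.IsEL
  | .and φ ψ => φ.IsEL ∧ ψ.IsEL
  | .know _ φ => φ.IsEL
  | .ann _ _ => False

structure Model (A : Type) where
  W : Type
  R : A → W → W → Prop
  V : Nat → W → Prop

/-- The submodel induced by a set of states. -/
def Model.restrict {A : Type} (M : Model A) (S : Set M.W) : Model A where
  W := {v : M.W // v ∈ S}
  R := fun a v u => M.R a v.1 u.1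
  V := fun n v => M.V n v.1

/-- Satisfaction for public announcement logic. -/
def Sat {A : Type} : (M : Model A) → M.W → Form A → Prop
  | M, w, .atom n => M.V n w
  | _, _, .bot => False
  | M, w, .neg φ => ¬ Sat M w φ
  | M, w, .and φ ψ => Sat M w φ ∧ Sat M w ψ
  | M, w, .know a φ => ∀ v, M.R a w v → Sat M v φ
  | M, w, .ann φ ψ => ∀ h : Sat M w φ, Sat (M.restrict {v | Sat M v φ}) ⟨w, h⟩ ψ

/-- An epistemic (S5) model: every accessibility relation is an equivalence. -/
def Model.IsEpistemic {A : Type} (M : Model A) : Prop := ∀ a, Equivalence (M.R a)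

/-- Group announcement formula ⋀_{i ∈ G} K_i (f i). -/
noncomputable def gConj {A : Type} (G : Finset A) (f : A → Form A) : Form A :=
  G.toList.foldr (fun a r => (Form.know a (f a)).and r) Form.top

/-- Translation of announcement formulas: `trAnn φ tφ ψ` computes t([φ]ψ), where `tφ = t(φ)`. -/
def trAnn {A : Type} : Form A → Form A → Form A → Form A
  | _, tφ, .atom n => tφ.imp (.atom n)
  | _, tφ, .bot => tφ.imp .bot
  | φ, tφ, .neg ψ => tφ.imp (.neg (trAnn φ tφ ψ))
  | φ, tφ, .and ψ χ => .and (trAnn φ tφ ψ) (trAnn φ tφ χ)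
  | φ, tφ, .know a ψ => tφ.imp (.know a (trAnn φ tφ ψ))
  | φ, tφ, .ann ψ χ => trAnn (.and φ (.ann φ ψ)) (.and tφ (trAnn φ tφ ψ)) χ

/-- The standard translation of PAL into epistemic logic:
t(p)=p, t(¬φ)=¬t(φ), t(φ∧ψ)=t(φ)∧t(ψ), t(K_a φ)=K_a t(φ), t([φ]p)=t(φ)→p,
t([φ]¬ψ)=t(φ)→¬t([φ]ψ), t([φ](ψ∧χ))=t([φ]ψ)∧t([φ]χ), t([φ]K_aψ)=t(φ)→K_a t([φ]ψ),
t([φ][ψ]χ)=t([φ∧[φ]ψ]χ). -/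
def tr {A : Type} : Form A → Form A
  | .atom n => .atom n
  | .bot => .bot
  | .neg φ => .neg (tr φ)
  | .and φ ψ => .and (tr φ) (tr ψ)
  | .know a φ => .know a (tr φ)
  | .ann φ ψ => trAnn φ (tr φ) ψ


theorem sat_imp {A : Type} (M : Model A) (w : M.W) (α β : Form A) :
    Sat M w (Form.imp α β) ↔ (Sat M w α → Sat M w β) := by
  simp only [Form.imp, Sat]; tauto

/-- Invariance of satisfaction under model isomorphism. -/
theorem sat_iso {A : Type} (φ : Form A) :
    ∀ (M N : Model A) (e : M.W → N.W) (einv : N.W → M.W),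
      (∀ v, e (einv v) = v) →
      (∀ a v u, M.R a v u ↔ N.R a (e v) (e u)) →
      (∀ n v, M.V n v ↔ N.V n (e v)) →
      ∀ w, Sat M w φ ↔ Sat N (e w) φ := by
  induction φ with
  | atom n => intro M N e einv h2 hR hV w; exact hV n w
  | bot => intro M N e einv h2 hR hV w; simp [Sat]
  | neg φ ih =>
    intro M N e einv h2 hR hV w
    simp only [Sat]; rw [ih M N e einv h2 hR hV w]
  | and φ ψ ihφ ihψ =>
    intro M N e einv h2 hR hV w
    simp only [Sat]; rw [ihφ M N e einv h2 hR hV w, ihψ M N e einv h2 hR hV w]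
  | know a φ ih =>
    intro M N e einv h2 hR hV w
    simp only [Sat]
    constructor
    · intro H u hu
      have hr : M.R a w (einv u) := (hR a w (einv u)).mpr (by rw [h2]; exact hu)
      have := (ih M N e einv h2 hR hV (einv u)).mp (H _ hr)
      rwa [h2] at this
    · intro H v hv
      exact (ih M N e einv h2 hR hV v).mpr (H (e v) ((hR a w v).mp hv))
  | ann α β ihα ihβ =>
    intro M N e einv h2 hR hV w
    simp only [Sat]
    have hα : ∀ v, Sat M v α ↔ Sat N (e v) α := ihα M N e einv h2 hR hV
    have key := ihβ (M.restrict {v | Sat M v α}) (N.restrict {v | Sat N v α})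
      (fun x => ⟨e x.1, (hα x.1).mp x.2⟩)
      (fun x => ⟨einv x.1, (hα (einv x.1)).mpr (by rw [h2]; exact x.2)⟩)
      (fun v => Subtype.ext (h2 v.1))
      (fun a v u => hR a v.1 u.1)
      (fun n v => hV n v.1)
    constructor
    · intro H h
      have h' : Sat M w α := (hα w).mpr h
      exact (key ⟨w, h'⟩).mp (H h')
    · intro H h
      exact (key ⟨w, h⟩).mpr (H ((hα w).mp h))

theorem ann_congr {A : Type} (M : Model A) (α β φ : Form A)
    (h : ∀ v, Sat M v α ↔ Sat M v β) (w : M.W) :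
    Sat M w (.ann α φ) ↔ Sat M w (.ann β φ) := by
  have key := sat_iso φ (M.restrict {v | Sat M v α}) (M.restrict {v | Sat M v β})
    (fun x => ⟨x.1, (h x.1).mp x.2⟩) (fun x => ⟨x.1, (h x.1).mpr x.2⟩)
    (fun v => rfl) (fun a v u => Iff.rfl) (fun n v => Iff.rfl)
  simp only [Sat]
  constructor
  · intro H hb
    exact (key ⟨w, (h w).mpr hb⟩).mp (H ((h w).mpr hb))
  · intro H ha
    exact (key ⟨w, ha⟩).mpr (H ((h w).mp ha))

/-- Composition of announcements: [α ∧ [α]β]χ ↔ [α][β]χ. -/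
theorem sat_comp {A : Type} (M : Model A) (w : M.W) (α β χ : Form A) :
    Sat M w (.ann (.and α (.ann α β)) χ) ↔ Sat M w (.ann α (.ann β χ)) := by
  have key := sat_iso χ
    (M.restrict {v | Sat M v (Form.and α (.ann α β))})
    ((M.restrict {v | Sat M v α}).restrict
      {x | Sat (M.restrict {v | Sat M v α}) x β})
    (fun x => ⟨⟨x.1, x.2.1⟩, x.2.2 x.2.1⟩)
    (fun x => ⟨x.1.1, ⟨x.1.2, fun _ => x.2⟩⟩)
    (fun v => rfl) (fun a v u => Iff.rfl) (fun n v => Iff.rfl)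
  simp only [Sat]
  constructor
  · intro H h1 h2
    exact (key ⟨w, ⟨h1, fun _ => h2⟩⟩).mp (H ⟨h1, fun _ => h2⟩)
  · intro H h
    exact (key ⟨w, h⟩).mpr (H h.1 (h.2 h.1))

theorem sat_gConj {A : Type} (M : Model A) (w : M.W) (G : Finset A) (f : A → Form A) :
    Sat M w (gConj G f) ↔ ∀ a ∈ G, Sat M w (.know a (f a)) := by
  unfold gConj
  have key : ∀ l : List A,
      Sat M w (l.foldr (fun a r => (Form.know a (f a)).and r) Form.top) ↔
        ∀ a ∈ l, Sat M w (.know a (f a)) := by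
    intro l
    induction l with
    | nil => simp [Sat, Form.top]
    | cons a l ih =>
      simp only [List.foldr, List.mem_cons]
      constructor
      · rintro ⟨h1, h2⟩ b hb
        rcases hb with rfl | hb
        · exact h1
        · exact (ih.mp h2) b hb
      · intro H
        exact ⟨H a (Or.inl rfl), ih.mpr fun b hb => H b (Or.inr hb)⟩
  rw [key]
  simp [Finset.mem_toList]

theorem trAnn_correct {A : Type} (χ : Form A) :
    ∀ (M : Model A) (φ tφ : Form A), (∀ v, Sat M v tφ ↔ Sat M v φ) →
      ∀ w, Sat M w (trAnn φ tφ χ) ↔ Sat M w (.ann φ χ) := by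
  induction χ with
  | atom n =>
    intro M φ tφ h w
    rw [trAnn, sat_imp]
    simp only [Sat, h]
    constructor
    · intro H hw; exact H hw
    · intro H hw; exact H hw
  | bot =>
    intro M φ tφ h w
    rw [trAnn, sat_imp]
    simp only [Sat, h]
  | neg ψ ih =>
    intro M φ tφ h w
    have ihw := ih M φ tφ h
    rw [trAnn, sat_imp]
    simp only [Sat, h, ihw]
    constructor
    · intro H hw
      intro hP
      exact H hw (fun _ => hP)
    · intro H hw hall
      exact H hw (hall hw)
  | and ψ₁ ψ₂ ih₁ ih₂ =>
    intro M φ tφ h w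
    rw [trAnn]
    simp only [Sat, ih₁ M φ tφ h, ih₂ M φ tφ h]
    constructor
    · rintro ⟨H1, H2⟩ hw; exact ⟨H1 hw, H2 hw⟩
    · intro H; exact ⟨fun hw => (H hw).1, fun hw => (H hw).2⟩
  | know a ψ ih =>
    intro M φ tφ h w
    rw [trAnn, sat_imp]
    simp only [Sat, h, ih M φ tφ h]
    constructor
    · intro H hw v hv
      exact H hw v.1 hv v.2
    · intro H hw v hv hv'
      exact H hw ⟨v, hv'⟩ hv
  | ann ψ χ' ihψ ihχ =>
    intro M φ tφ h w
    rw [trAnn]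
    have hnew : ∀ v, Sat M v (Form.and tφ (trAnn φ tφ ψ)) ↔
        Sat M v (Form.and φ (.ann φ ψ)) := by
      intro v
      simp only [Sat, h, ihψ M φ tφ h]
    rw [ihχ M (Form.and φ (.ann φ ψ)) (Form.and tφ (trAnn φ tφ ψ)) hnew w]
    exact sat_comp M w φ ψ χ'

theorem tr_correct {A : Type} (φ : Form A) :
    ∀ (M : Model A) (w : M.W), Sat M w (tr φ) ↔ Sat M w φ := by
  induction φ with
  | atom n => intro M w; rw [tr]
  | bot => intro M w; rw [tr]
  | neg φ ih => intro M w; rw [tr]; simp only [Sat, ih]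
  | and φ ψ ihφ ihψ => intro M w; rw [tr]; simp only [Sat, ihφ, ihψ]
  | know a φ ih => intro M w; rw [tr]; simp only [Sat, ih]
  | ann φ ψ ihφ _ => intro M w; exact trAnn_correct ψ M φ (tr φ) (fun v => ihφ M v) w

/-- Lemma 1: [ψ ∧ ⋀_{i∈G} K_i t([ψ]χ_i)] φ ↔ [ψ][⋀_{i∈G} K_i χ_i] φ is valid,
for epistemic ψ and χ_i. -/
theorem lemma_one {A : Type} (G : Finset A) (ψ : Form A) (hψ : ψ.IsEL)
    (χ : A → Form A) (hχ : ∀ a, (χ a).IsEL) (φ : Form A)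
    (M : Model A) (hM : M.IsEpistemic) (w : M.W) :
    Sat M w (Form.ann (ψ.and (gConj G (fun i => tr (Form.ann ψ (χ i))))) φ) ↔
      Sat M w (Form.ann ψ (Form.ann (gConj G χ) φ)) := by
  have hpt : ∀ v, Sat M v (ψ.and (gConj G (fun i => tr (Form.ann ψ (χ i))))) ↔
      Sat M v (ψ.and (Form.ann ψ (gConj G χ))) := by
    intro v
    simp only [Sat]
    constructor
    · rintro ⟨h1, h2⟩
      refine ⟨h1, fun hv => ?_⟩
      refine (sat_gConj _ _ G χ).mpr ?_
      intro a ha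
      have h3 := (sat_gConj M v G _).mp h2 a ha
      intro u hu
      have h4 := (tr_correct (Form.ann ψ (χ a)) M u.1).mp (h3 u.1 hu)
      exact h4 u.2
    · rintro ⟨h1, h2⟩
      refine ⟨h1, ?_⟩
      rw [sat_gConj]
      intro a ha
      have h3 := (sat_gConj _ _ G χ).mp (h2 h1) a ha
      intro u hu
      rw [tr_correct]
      intro hu'
      exact h3 ⟨u, hu'⟩ hu
  calc Sat M w (Form.ann (ψ.and (gConj G (fun i => tr (Form.ann ψ (χ i))))) φ)
      ↔ Sat M w (Form.ann (ψ.and (Form.ann ψ (gConj G χ))) φ) := ann_congr M _ _ φ hpt w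
    _ ↔ Sat M w (Form.ann ψ (Form.ann (gConj G χ) φ)) := sat_comp M w ψ (gConj G χ) φ
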